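/- arXiv:1910.12480 — 3 statements merged into one kernel-verified Lean document; each statement's English description precedes it below -/
import Mathlib

section
/- Let q ≥ 2 and let H be the graph obtained from a path y₁y₂…y_{2q+1} by adding a vertex x adjacent to y₁, y₃, …, y_{2q+1} (a semi-fan with center x). Then H has an orientation D such that the out-degree of x is 3, the out-degrees of y₁ and y_{2q+1} are 0, the out-degree of y_i is 1 for every even i, and the out-degree of y_i is 2 for every odd i with 1 < i < 2q+1. -/
/-- The semi-fan: a path `v₁ … v_{2q+1}` (vertex `some i` is `v_{i+1}`) together with a
center `u` (vertex `none`) adjacent to `v₁, v₃, …, v_{2q+1}` (the `some i` with `i` even). -/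
def semiFan (q : ℕ) : SimpleGraph (Option (Fin (2 * q + 1))) :=
  SimpleGraph.fromRel (fun a b =>
    (∃ i j : Fin (2 * q + 1), a = some i ∧ b = some j ∧ (j : ℕ) = (i : ℕ) + 1) ∨
    (∃ i : Fin (2 * q + 1), a = none ∧ b = some i ∧ (i : ℕ) % 2 = 0))

/-- The orientation: center sends to positions `0`, `2`, `2q`; path edges `0 ← 1`, `1 ← 2`,
and `i → i+1` for `i ≥ 2`; even internal vertices `≥ 4` send their spoke to the center. -/
def fanD (q : ℕ) : Option (Fin (2 * q + 1)) → Option (Fin (2 * q + 1)) → Bool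
  | none, none => false
  | none, some b => decide ((b : ℕ) = 0 ∨ (b : ℕ) = 2 ∨ (b : ℕ) = 2 * q)
  | some a, none => decide ((a : ℕ) % 2 = 0 ∧ 4 ≤ (a : ℕ) ∧ (a : ℕ) < 2 * q)
  | some a, some b => decide (((a : ℕ) = 1 ∧ (b : ℕ) = 0) ∨ ((a : ℕ) = 2 ∧ (b : ℕ) = 1) ∨
      (2 ≤ (a : ℕ) ∧ (b : ℕ) = (a : ℕ) + 1))

/-- for `q ≥ 2` the semi-fan has an orientation with out-degree `3` at the
center, `0` at the two ends of the path, `1` at `v_i` for even `i`, and `2` at the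
internal `v_i` with odd `i`. (Here `some i` is `v_{i+1}`.) -/
theorem semiFan_orientation (q : ℕ) (hq : 2 ≤ q) :
    ∃ D : Option (Fin (2 * q + 1)) → Option (Fin (2 * q + 1)) → Bool,
      (∀ u v, (D u v = true ∨ D v u = true) ↔ (semiFan q).Adj u v) ∧
      (∀ u v, D u v = true → D v u = false) ∧
      (Finset.univ.filter (fun w => D none w = true)).card = 3 ∧
      (∀ i : Fin (2 * q + 1), (i : ℕ) = 0 ∨ (i : ℕ) = 2 * q →
        (Finset.univ.filter (fun w => D (some i) w = true)).card = 0) ∧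
      (∀ i : Fin (2 * q + 1), (i : ℕ) % 2 = 1 →
        (Finset.univ.filter (fun w => D (some i) w = true)).card = 1) ∧
      (∀ i : Fin (2 * q + 1), (i : ℕ) % 2 = 0 → 0 < (i : ℕ) → (i : ℕ) < 2 * q →
        (Finset.univ.filter (fun w => D (some i) w = true)).card = 2) := by
  refine ⟨fanD q, ?_, ?_, ?_, ?_, ?_, ?_⟩
  · intro u v
    cases u with
    | none => cases v with
      | none => simp [fanD, semiFan]
      | some b => have := b.isLt; simp [fanD, semiFan, -Fin.val_eq_zero_iff]; omega
    | some a => cases v with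
      | none => have := a.isLt; simp [fanD, semiFan, -Fin.val_eq_zero_iff]; omega
      | some b =>
        have := a.isLt; have := b.isLt
        simp [fanD, semiFan, Ne, -Fin.val_eq_zero_iff]; rw [Fin.ext_iff]; omega
  · intro u v
    cases u with
    | none => cases v with
      | none => simp [fanD]
      | some b => simp [fanD, -Fin.val_eq_zero_iff]; omega
    | some a => cases v with
      | none => simp [fanD, -Fin.val_eq_zero_iff]; omega
      | some b => have := a.isLt; simp [fanD, -Fin.val_eq_zero_iff]; omega
  · have h : (Finset.univ.filter (fun w => fanD q none w = true))
        = {some ⟨0, by omega⟩, some ⟨2, by omega⟩, some ⟨2*q, by omega⟩} := by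
      ext w
      cases w with
      | none => simp [fanD]
      | some b => have := b.isLt; simp [fanD, Fin.ext_iff, -Fin.val_eq_zero_iff]
    rw [h, Finset.card_insert_of_notMem (by simp [Fin.ext_iff]; omega),
      Finset.card_insert_of_notMem (by simp [Fin.ext_iff]; omega), Finset.card_singleton]
  · intro i h
    rw [Finset.card_eq_zero, Finset.filter_eq_empty_iff]
    intro w _
    cases w with
    | none => have := i.isLt; simp [fanD]; omega
    | some b => have := i.isLt; have := b.isLt; simp [fanD]; omega
  · intro i h
    have hi := i.isLt
    rcases Nat.eq_or_lt_of_le (show 1 ≤ (i:ℕ) by omega) with h1 | h1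
    · have he : (Finset.univ.filter (fun w => fanD q (some i) w = true))
          = {some ⟨0, by omega⟩} := by
        ext w
        cases w with
        | none => simp [fanD]; omega
        | some b => have := b.isLt; simp [fanD, Fin.ext_iff, -Fin.val_eq_zero_iff]; omega
      rw [he, Finset.card_singleton]
    · have he : (Finset.univ.filter (fun w => fanD q (some i) w = true))
          = {some ⟨(i:ℕ)+1, by omega⟩} := by
        ext w
        cases w with
        | none => simp [fanD]; omega
        | some b => have := b.isLt; simp [fanD, Fin.ext_iff, -Fin.val_eq_zero_iff]; omega
      rw [he, Finset.card_singleton]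
  · intro i h h0 h2
    have hi := i.isLt
    rcases Nat.eq_or_lt_of_le (show 2 ≤ (i:ℕ) by omega) with h1 | h1
    · have he : (Finset.univ.filter (fun w => fanD q (some i) w = true))
          = {some ⟨1, by omega⟩, some ⟨3, by omega⟩} := by
        ext w
        cases w with
        | none => simp [fanD]; omega
        | some b => have := b.isLt; simp [fanD, Fin.ext_iff, -Fin.val_eq_zero_iff]; omega
      rw [he, Finset.card_insert_of_notMem (by simp [Fin.ext_iff]), Finset.card_singleton]
    · have he : (Finset.univ.filter (fun w => fanD q (some i) w = true))
          = {some ⟨(i:ℕ)+1, by omega⟩, none} := by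
        ext w
        cases w with
        | none => simp [fanD]; omega
        | some b => have := b.isLt; simp [fanD, Fin.ext_iff, -Fin.val_eq_zero_iff]; omega
      rw [he, Finset.card_insert_of_notMem (by simp), Finset.card_singleton]
end

section
/- Let G be a triangle-free graph, L a list assignment, and let v₁, v₂, v₃ be three consecutive vertices of an induced path in G with |L(v₂)| = 2, L(v₂) ⊆ L(v₃), L(v₂) ⊆ L(v₁). Suppose v₁ and v₃ have a common neighbour w ≠ v₂. Let G' be obtained from G by identifying v₁ and v₃ into a vertex v* with L(v*) = L(v₂) (assuming v₁ and v₃ are non-adjacent, which holds since G is triangle-free). If G' has a proper L-colouring, then G has a proper L-colouring. -/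
/-- A proper colouring of `G` from the lists `L`. -/
def ProperListColoring {V : Type} (G : SimpleGraph V) (L : V → Finset ℕ) (φ : V → ℕ) : Prop :=
  (∀ v, φ v ∈ L v) ∧ ∀ u v, G.Adj u v → φ u ≠ φ v

/-- The graph obtained from `G` by identifying `v₃` into `v₁` (merged vertex `v₁`). -/
def identifyVerts {V : Type} (G : SimpleGraph V) (u w : V) : SimpleGraph V :=
  SimpleGraph.fromRel (fun a b =>
    (G.Adj a b ∧ a ≠ w ∧ b ≠ w) ∨ (a = u ∧ G.Adj w b ∧ b ≠ w))

/-- in a triangle-free graph, with `v₁v₂v₃` an induced path,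
`|L(v₂)| = 2`, `L(v₂) ⊆ L(v₁) ∩ L(v₃)`, and `v₁, v₃` having a common neighbour `w ≠ v₂`:
if the graph obtained by identifying `v₁` and `v₃` into a vertex `v*` with list `L(v₂)`
has a proper colouring, then `G` has a proper `L`-colouring. -/
theorem coloring_of_identification_path {V : Type} (G : SimpleGraph V)
    (htf : G.CliqueFree 3) (v₁ v₂ v₃ w : V)
    (h12 : G.Adj v₁ v₂) (h23 : G.Adj v₂ v₃) (h13 : ¬ G.Adj v₁ v₃)
    (L : V → Finset ℕ)
    (hL2 : (L v₂).card = 2) (hL23 : L v₂ ⊆ L v₃) (hL21 : L v₂ ⊆ L v₁)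
    (hw : w ≠ v₂) (hw1 : G.Adj v₁ w) (hw3 : G.Adj v₃ w)
    (h : ∃ ψ : V → ℕ, ψ v₁ ∈ L v₂ ∧ (∀ x, x ≠ v₃ → x ≠ v₁ → ψ x ∈ L x) ∧
      ∀ x y, (identifyVerts G v₁ v₃).Adj x y → ψ x ≠ ψ y) :
    ∃ φ : V → ℕ, ProperListColoring G L φ := by
  classical
  obtain ⟨ψ, hψ1, hψmem, hψadj⟩ := h
  refine ⟨fun x => if x = v₃ then ψ v₁ else ψ x, ?_, ?_⟩
  · intro v
    by_cases hv3 : v = v₃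
    · subst hv3; simp [hL23 hψ1]
    by_cases hv1 : v = v₁
    · subst hv1; simp [hv3, hL21 hψ1]
    · simp [hv3, hψmem v hv3 hv1]
  · intro u v huv
    have hne : u ≠ v := huv.ne
    by_cases hu3 : u = v₃ <;> by_cases hv3 : v = v₃
    · exact absurd (hu3.trans hv3.symm) hne
    · subst hu3
      have hv1 : v ≠ v₁ := fun hv1 => h13 (hv1 ▸ huv.symm)
      simpa [hv3] using hψadj v₁ v ⟨hv1.symm, Or.inl (Or.inr ⟨rfl, huv, hv3⟩)⟩
    · subst hv3
      have hu1 : u ≠ v₁ := fun hu1 => h13 (hu1 ▸ huv)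
      simpa [hu3] using (hψadj v₁ u ⟨hu1.symm, Or.inl (Or.inr ⟨rfl, huv.symm, hu3⟩)⟩).symm
    · simpa [hu3, hv3] using hψadj u v ⟨hne, Or.inl (Or.inl ⟨huv, hu3, hv3⟩)⟩
end

section
/- Let G be a bipartite graph and let d : V(G) → ℕ be a function with Σ_v d(v) = |E(G)|. If G has an orientation D in which every vertex v has out-degree exactly d(v), then G is L-colourable for every list assignment L with |L(v)| ≥ d(v) + 1 for all v. -/
private lemma fin2_eq_of_ne_zero (a b : Fin 2) (ha : a ≠ 0) (hb : b ≠ 0) : a = b := by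
  revert ha hb; revert a b; decide

/-- Every digraph whose underlying graph is bipartite has a kernel on every vertex subset. -/
private lemma kernel_exists {V : Type} (G : SimpleGraph V) (hbip : G.Colorable 2)
    (D : V → V → Bool)
    (hadj : ∀ u v, D u v = true → G.Adj u v)
    (T : Set V) :
    ∃ K : Set V, K ⊆ T ∧ (∀ u ∈ K, ∀ w ∈ K, ¬ (D u w = true)) ∧
      (∀ v ∈ T, v ∉ K → ∃ w ∈ K, D v w = true) := by
  obtain ⟨C⟩ := hbip
  set g : Set V →o Set V :=
    ⟨fun X => {a | a ∈ T ∧ C a = 0 ∧ ∀ b ∈ T, D a b = true → ∃ x ∈ X, D b x = true},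
     by
       intro X Y hXY a ha
       exact ⟨ha.1, ha.2.1, fun b hb hD =>
         (ha.2.2 b hb hD).imp fun x hx => ⟨hXY hx.1, hx.2⟩⟩⟩ with hg
  set X := OrderHom.lfp g with hXdef
  have hX : g X = X := OrderHom.map_lfp g
  have hXmem : ∀ a, a ∈ X ↔
      (a ∈ T ∧ C a = 0 ∧ ∀ b ∈ T, D a b = true → ∃ x ∈ X, D b x = true) := by
    intro a
    constructor
    · intro h; rw [← hX] at h; exact h
    · intro h; rw [← hX]; exact h
  refine ⟨X ∪ {b | b ∈ T ∧ C b ≠ 0 ∧ ∀ x ∈ X, ¬ (D b x = true)}, ?_, ?_, ?_⟩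
  · intro v hv
    rcases hv with hv | hv
    · exact ((hXmem v).mp hv).1
    · exact hv.1
  · intro u hu w hw hD
    have hAdj := hadj _ _ hD
    rcases hu with hu | hu <;> rcases hw with hw | hw
    · have h1 := (hXmem u).mp hu
      have h2 := (hXmem w).mp hw
      exact C.valid hAdj (h1.2.1.trans h2.2.1.symm)
    · obtain ⟨x, hx, hDx⟩ := ((hXmem u).mp hu).2.2 w hw.1 hD
      exact hw.2.2 x hx hDx
    · exact hu.2.2 w hw hD
    · exact C.valid hAdj (fin2_eq_of_ne_zero _ _ hu.2.1 hw.2.1)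
  · intro v hvT hvK
    have hv1 : v ∉ X := fun h => hvK (Or.inl h)
    have hv2 : v ∉ {b | b ∈ T ∧ C b ≠ 0 ∧ ∀ x ∈ X, ¬ (D b x = true)} :=
      fun h => hvK (Or.inr h)
    by_cases hC : C v = 0
    · have : ¬ (∀ b ∈ T, D v b = true → ∃ x ∈ X, D b x = true) := by
        intro h; exact hv1 ((hXmem v).mpr ⟨hvT, hC, h⟩)
      push_neg at this
      obtain ⟨b, hbT, hDb, hbno⟩ := this
      have hbC : C b ≠ 0 := by
        intro h0
        exact C.valid (hadj _ _ hDb) (hC.trans h0.symm)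
      refine ⟨b, Or.inr ⟨hbT, hbC, ?_⟩, hDb⟩
      intro x hx hDx
      exact hbno x hx hDx
    · have : ¬ (∀ x ∈ X, ¬ (D v x = true)) := by
        intro h; exact hv2 ⟨hvT, hC, h⟩
      push_neg at this
      obtain ⟨x, hx, hDx⟩ := this
      exact ⟨x, Or.inl hx, hDx⟩

private lemma aux_coloring {V : Type} [Fintype V] [DecidableEq V]
    (G : SimpleGraph V) (hbip : G.Colorable 2)
    (D : V → V → Bool)
    (hadj : ∀ u v, D u v = true → G.Adj u v)
    (hadj2 : ∀ u v, G.Adj u v → D u v = true ∨ D v u = true) :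
    ∀ n (L : V → Finset ℕ) (S : Finset V),
      (∑ v ∈ S, (L v).card) ≤ n →
      (∀ v ∈ S, (S.filter fun w => D v w = true).card < (L v).card) →
      ∃ φ : V → ℕ, (∀ v ∈ S, φ v ∈ L v) ∧
        ∀ u ∈ S, ∀ v ∈ S, G.Adj u v → φ u ≠ φ v := by
  intro n
  induction n using Nat.strong_induction_on with
  | _ n IH =>
  intro L S hsum hdeg
  classical
  rcases S.eq_empty_or_nonempty with rfl | ⟨v₀, hv₀⟩
  · exact ⟨fun _ => 0, by simp, by simp⟩
  have hLv₀ : (L v₀).Nonempty :=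
    Finset.card_pos.mp (lt_of_le_of_lt (Nat.zero_le _) (hdeg v₀ hv₀))
  obtain ⟨c, hc⟩ := hLv₀
  obtain ⟨K, hKT, hKind, hKabs⟩ :=
    kernel_exists G hbip D hadj {v | v ∈ S ∧ c ∈ L v}
  have hv₀T : v₀ ∈ {v | v ∈ S ∧ c ∈ L v} := ⟨hv₀, hc⟩
  obtain ⟨k, hk⟩ : ∃ k, k ∈ K := by
    by_cases h : v₀ ∈ K
    · exact ⟨v₀, h⟩
    · obtain ⟨w, hw, _⟩ := hKabs v₀ hv₀T h; exact ⟨w, hw⟩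
  set S' : Finset V := S.filter (fun v => v ∉ K) with hS'
  set L' : V → Finset ℕ := fun v => (L v).erase c with hL'
  have hkS : k ∈ S := (hKT hk).1
  -- the measure decreases
  have hmeas : ∑ v ∈ S', (L' v).card < ∑ v ∈ S, (L v).card := by
    have h1 : ∑ v ∈ S', (L' v).card ≤ ∑ v ∈ S', (L v).card :=
      Finset.sum_le_sum fun v _ => Finset.card_erase_le
    have hsub : S' ⊆ S.erase k := by
      intro v hv
      rw [hS', Finset.mem_filter] at hv
      refine Finset.mem_erase.mpr ⟨?_, hv.1⟩
      intro h; exact hv.2 (h ▸ hk)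
    have h2 : ∑ v ∈ S', (L v).card ≤ ∑ v ∈ S.erase k, (L v).card :=
      Finset.sum_le_sum_of_subset hsub
    have h3 : (L k).card + ∑ v ∈ S.erase k, (L v).card = ∑ v ∈ S, (L v).card :=
      Finset.add_sum_erase S (fun v => (L v).card) hkS
    have hck : 0 < (L k).card := Finset.card_pos.mpr ⟨c, (hKT hk).2⟩
    omega
  -- degree condition for the smaller instance
  have hdeg' : ∀ v ∈ S', (S'.filter fun w => D v w = true).card < (L' v).card := by
    intro v hv
    rw [hS', Finset.mem_filter] at hv
    obtain ⟨hvS, hvK⟩ := hv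
    by_cases hcL : c ∈ L v
    · obtain ⟨w, hwK, hDw⟩ := hKabs v ⟨hvS, hcL⟩ hvK
      have hwS : w ∈ S := (hKT hwK).1
      have hsubf : (S'.filter fun x => D v x = true) ⊆
          ((S.filter fun x => D v x = true).erase w) := by
        intro x hx
        rw [Finset.mem_filter, hS', Finset.mem_filter] at hx
        refine Finset.mem_erase.mpr ⟨?_, Finset.mem_filter.mpr ⟨hx.1.1, hx.2⟩⟩
        intro h; exact hx.1.2 (h ▸ hwK)
      have hwf : w ∈ (S.filter fun x => D v x = true) :=
        Finset.mem_filter.mpr ⟨hwS, hDw⟩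
      have h1 : (S'.filter fun x => D v x = true).card ≤
          (S.filter fun x => D v x = true).card - 1 := by
        have := Finset.card_le_card hsubf
        rwa [Finset.card_erase_of_mem hwf] at this
      have h2 : (L' v).card = (L v).card - 1 := Finset.card_erase_of_mem hcL
      have h3 := hdeg v hvS
      have h4 : 0 < (S.filter fun x => D v x = true).card :=
        Finset.card_pos.mpr ⟨w, hwf⟩
      omega
    · have h2 : (L' v).card = (L v).card := by
        rw [hL']; simp only []
        rw [Finset.erase_eq_of_notMem hcL]
      have hsubf : (S'.filter fun x => D v x = true) ⊆
          (S.filter fun x => D v x = true) := by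
        intro x hx
        rw [Finset.mem_filter, hS', Finset.mem_filter] at hx
        exact Finset.mem_filter.mpr ⟨hx.1.1, hx.2⟩
      have h1 := Finset.card_le_card hsubf
      have h3 := hdeg v hvS
      omega
  obtain ⟨φ', hφ'mem, hφ'prop⟩ :=
    IH (∑ v ∈ S', (L' v).card) (lt_of_lt_of_le hmeas hsum) L' S' le_rfl hdeg'
  refine ⟨fun v => if v ∈ K then c else φ' v, ?_, ?_⟩
  · intro v hvS
    by_cases hvK : v ∈ K
    · simp only [hvK, if_true]
      exact (hKT hvK).2
    · simp only [hvK, if_false]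
      have hvS' : v ∈ S' := by rw [hS', Finset.mem_filter]; exact ⟨hvS, hvK⟩
      exact Finset.mem_of_mem_erase (hφ'mem v hvS')
  · intro u hu v hv hAdj
    by_cases huK : u ∈ K <;> by_cases hvK : v ∈ K <;>
      simp only [huK, hvK, if_true, if_false]
    · rcases hadj2 u v hAdj with h | h
      · exact absurd h (hKind u huK v hvK)
      · exact absurd h (hKind v hvK u huK)
    · have hvS' : v ∈ S' := by rw [hS', Finset.mem_filter]; exact ⟨hv, hvK⟩
      have := hφ'mem v hvS'
      exact fun h => Finset.ne_of_mem_erase this h.symm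
    · have huS' : u ∈ S' := by rw [hS', Finset.mem_filter]; exact ⟨hu, huK⟩
      have := hφ'mem u huS'
      exact Finset.ne_of_mem_erase this
    · have huS' : u ∈ S' := by rw [hS', Finset.mem_filter]; exact ⟨hu, huK⟩
      have hvS' : v ∈ S' := by rw [hS', Finset.mem_filter]; exact ⟨hv, hvK⟩
      exact hφ'prop u huS' v hvS' hAdj

/-- a bipartite graph with an orientation whose out-degrees are given by `d`
(with `∑ d(v) = |E|`) is colourable from any lists with `|L(v)| ≥ d(v) + 1` (Alon–Tarsi). -/
theorem bipartite_alon_tarsi {V : Type} [Fintype V] [DecidableEq V]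
    (G : SimpleGraph V) [DecidableRel G.Adj] (hbip : G.Colorable 2)
    (d : V → ℕ) (hsum : ∑ v, d v = G.edgeFinset.card)
    (D : V → V → Bool)
    (hDadj : ∀ u v, (D u v = true ∨ D v u = true) ↔ G.Adj u v)
    (hDasymm : ∀ u v, D u v = true → D v u = false)
    (hDdeg : ∀ v, (Finset.univ.filter (fun w => D v w = true)).card = d v)
    (L : V → Finset ℕ) (hL : ∀ v, d v + 1 ≤ (L v).card) :
    ∃ φ : V → ℕ, ProperListColoring G L φ := by
  obtain ⟨φ, hmem, hprop⟩ :=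
    aux_coloring G hbip D
      (fun u v h => (hDadj u v).mp (Or.inl h))
      (fun u v h => (hDadj u v).mpr h)
      (∑ v, (L v).card) L Finset.univ le_rfl
      (fun v _ => by rw [hDdeg v]; exact hL v)
  exact ⟨φ, fun v => hmem v (Finset.mem_univ v),
    fun u v h => hprop u (Finset.mem_univ u) v (Finset.mem_univ v) h⟩
end
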